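/- For every F ∈ SL(2) there exist Q₁, Q₂ ∈ O(2) such that F = Q₁ K Q₂, where K is the simple shear matrix with rows (1, γ) and (0, 1) and γ = √(‖F‖² − 2). (In particular every area-preserving planar deformation gradient is a simple shear composed with orthogonal transformations.) -/
import Mathlib


open Matrix

/-- Existence of a unit direction on which the quadratic form takes the value 1. -/
lemma sl2_key (a b d γ : ℝ) (hdet : a * d - b ^ 2 = 1) (hγ : γ ^ 2 = a + d - 2) :
    ∃ c s : ℝ, c ^ 2 + s ^ 2 = 1 ∧ a * c ^ 2 + 2 * b * c * s + d * s ^ 2 = 1 := by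
  by_cases h : γ - b = 0 ∧ a - 1 = 0
  · refine ⟨1, 0, by ring, ?_⟩
    have ha : a = 1 := by linarith [h.2]
    rw [ha]; ring
  · set x := γ - b with hx
    set y := a - 1 with hy
    have hn : 0 < x ^ 2 + y ^ 2 := by
      rcases lt_or_eq_of_le (by positivity : (0:ℝ) ≤ x ^ 2 + y ^ 2) with h1 | h1
      · exact h1
      · exfalso
        have hx0 : x ^ 2 = 0 := le_antisymm (by nlinarith [sq_nonneg y]) (sq_nonneg x)
        have hy0 : y ^ 2 = 0 := le_antisymm (by nlinarith [sq_nonneg x]) (sq_nonneg y)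
        exact h ⟨sq_eq_zero_iff.mp hx0, sq_eq_zero_iff.mp hy0⟩
    set n := Real.sqrt (x ^ 2 + y ^ 2) with hndef
    have hn0 : 0 < n := Real.sqrt_pos.mpr hn
    have hne : n ≠ 0 := ne_of_gt hn0
    have hn2 : n ^ 2 = x ^ 2 + y ^ 2 := Real.sq_sqrt hn.le
    have hkey : a * x ^ 2 + 2 * b * x * y + d * y ^ 2 = x ^ 2 + y ^ 2 := by
      rw [hx, hy]; linear_combination (a - 1) * hγ + (a - 1) * hdet
    refine ⟨x / n, y / n, ?_, ?_⟩
    · have e : (x / n) ^ 2 + (y / n) ^ 2 = (x ^ 2 + y ^ 2) / n ^ 2 := by ring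
      rw [e, ← hn2, div_self (pow_ne_zero 2 hne)]
    · have e : a * (x / n) ^ 2 + 2 * b * (x / n) * (y / n) + d * (y / n) ^ 2
          = (a * x ^ 2 + 2 * b * x * y + d * y ^ 2) / n ^ 2 := by ring
      rw [e, hkey, ← hn2, div_self (pow_ne_zero 2 hne)]

/-- Every `F ∈ SL(2)` can be written as `F = Q₁ K Q₂` with
`Q₁, Q₂ ∈ O(2)` and `K` the simple shear matrix with rows `(1, γ)`, `(0, 1)`,
where `γ = √(‖F‖² − 2)` and `‖F‖² = tr(FᵀF)` is the squared Frobenius norm. -/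
theorem sl2_eq_orthogonal_shear_orthogonal
    (F : Matrix (Fin 2) (Fin 2) ℝ) (hF : F.det = 1) :
    ∃ Q₁ Q₂ : Matrix (Fin 2) (Fin 2) ℝ,
      Q₁ᵀ * Q₁ = 1 ∧ Q₂ᵀ * Q₂ = 1 ∧
      F = Q₁ * !![1, Real.sqrt ((Fᵀ * F).trace - 2); 0, 1] * Q₂ := by
  have hFdet : F 0 0 * F 1 1 - F 0 1 * F 1 0 = 1 := by
    rw [Matrix.det_fin_two] at hF; linarith
  set p := F 0 0 with hp
  set q := F 0 1 with hq
  set r := F 1 0 with hr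
  set w := F 1 1 with hw
  have hFeta : F = !![p, q; r, w] := by
    rw [hp, hq, hr, hw]; exact Matrix.eta_fin_two F
  set a : ℝ := p ^ 2 + r ^ 2 with ha
  set b : ℝ := p * q + r * w with hb
  set d : ℝ := q ^ 2 + w ^ 2 with hd
  have hFT : Fᵀ = !![p, r; q, w] := by
    rw [hFeta]; ext i j; fin_cases i <;> fin_cases j <;> simp
  have hS : Fᵀ * F = !![a, b; b, d] := by
    rw [hFT, hFeta, Matrix.mul_fin_two]
    ext i j
    fin_cases i <;> fin_cases j <;> simp [ha, hb, hd] <;> ring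
  have htr : (Fᵀ * F).trace = a + d := by
    rw [hS, Matrix.trace_fin_two]; simp
  have hdet : a * d - b ^ 2 = 1 := by
    rw [ha, hb, hd]; linear_combination (p * w - q * r + 1) * hFdet
  set γ := Real.sqrt ((Fᵀ * F).trace - 2) with hγdef
  have htr2 : (Fᵀ * F).trace - 2 = (p - w) ^ 2 + (q + r) ^ 2 := by
    rw [htr, ha, hd]; linear_combination 2 * hFdet
  have hγ2 : γ ^ 2 = a + d - 2 := by
    rw [hγdef, Real.sq_sqrt (by rw [htr2]; positivity), htr]
  have hγ0 : 0 ≤ γ := Real.sqrt_nonneg _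
  obtain ⟨c, s, hcs, h1⟩ := sl2_key a b d γ hdet hγ2
  -- the off-diagonal entry after the rotation
  set β : ℝ := b * (c ^ 2 - s ^ 2) + (d - a) * c * s with hβdef
  have h2 : a * s ^ 2 - 2 * b * c * s + d * c ^ 2 = a + d - 1 := by
    linear_combination (a + d) * hcs - h1
  have hβ2 : β ^ 2 = γ ^ 2 := by
    have hid : (a * c ^ 2 + 2 * b * c * s + d * s ^ 2) *
        (a * s ^ 2 - 2 * b * c * s + d * c ^ 2) - β ^ 2
        = (a * d - b ^ 2) * (c ^ 2 + s ^ 2) ^ 2 := by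
      rw [hβdef]; ring
    rw [h1, h2, hdet, hcs] at hid
    linarith [hγ2, hid]
  set ε : ℝ := if 0 ≤ β then 1 else -1 with hεdef
  have hε2 : ε ^ 2 = 1 := by
    rw [hεdef]; split <;> norm_num
  have heβ : ε * β = γ := by
    rw [hεdef]
    split
    · next hb0 =>
      have hββ : β = Real.sqrt (β ^ 2) := (Real.sqrt_sq hb0).symm
      rw [one_mul, hββ, hβ2, Real.sqrt_sq hγ0]
    · next hb0 =>
      have hββ : -β = Real.sqrt ((-β) ^ 2) := (Real.sqrt_sq (by linarith)).symm
      rw [neg_one_mul, hββ, show (-β) ^ 2 = γ ^ 2 by rw [← hβ2]; ring,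
        Real.sqrt_sq hγ0]
  set K : Matrix (Fin 2) (Fin 2) ℝ := !![1, γ; 0, 1] with hK
  set K' : Matrix (Fin 2) (Fin 2) ℝ := !![1, -γ; 0, 1] with hK'
  set Q : Matrix (Fin 2) (Fin 2) ℝ := !![c, s; -(ε * s), ε * c] with hQ
  have hQT : Qᵀ = !![c, -(ε * s); s, ε * c] := by
    rw [hQ]; ext i j; fin_cases i <;> fin_cases j <;> simp
  have hKT : Kᵀ = !![1, 0; γ, 1] := by
    rw [hK]; ext i j; fin_cases i <;> fin_cases j <;> simp
  have hK'T : K'ᵀ = !![1, 0; -γ, 1] := by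
    rw [hK']; ext i j; fin_cases i <;> fin_cases j <;> simp
  have hQtQ : Qᵀ * Q = 1 := by
    rw [hQT, hQ, Matrix.mul_fin_two, Matrix.one_fin_two]
    ext i j
    fin_cases i <;> fin_cases j <;> simp <;>
      first
        | linear_combination hcs + s ^ 2 * hε2
        | linear_combination -(c * s) * hε2
        | linear_combination hcs + c ^ 2 * hε2
        | linear_combination c * s * hε2
        | ring
  have hK'K : K' * K = 1 := by
    rw [hK', hK, Matrix.mul_fin_two, Matrix.one_fin_two]
    ext i j
    fin_cases i <;> fin_cases j <;> simp
  have hKK' : K * K' = 1 := by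
    rw [hK, hK', Matrix.mul_fin_two, Matrix.one_fin_two]
    ext i j
    fin_cases i <;> fin_cases j <;> simp
  have hM : Q * (Fᵀ * F) * Qᵀ = Kᵀ * K := by
    rw [hS, hQ, hQT, hKT, hK, Matrix.mul_fin_two, Matrix.mul_fin_two,
      Matrix.mul_fin_two]
    ext i j
    fin_cases i <;> fin_cases j <;> simp <;>
      first
        | linear_combination h1
        | linear_combination heβ - ε * hβdef
        | linear_combination heβ + ε * hβdef
        | linear_combination (a * s ^ 2 - 2 * b * c * s + d * c ^ 2) * hε2 + h2 - hγ2
        | ring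
  refine ⟨F * Qᵀ * K', Q, ?_, hQtQ, ?_⟩
  · have e1 : (F * Qᵀ * K')ᵀ * (F * Qᵀ * K') = K'ᵀ * (Q * (Fᵀ * F) * Qᵀ) * K' := by
      simp only [Matrix.transpose_mul, Matrix.transpose_transpose, Matrix.mul_assoc]
    rw [e1, hM]
    have e2 : K'ᵀ * (Kᵀ * K) * K' = (K * K')ᵀ * (K * K') := by
      simp only [Matrix.transpose_mul, Matrix.mul_assoc]
    rw [e2, hKK']
    simp
  · have e3 : F * Qᵀ * K' * K * Q = F := by
      rw [Matrix.mul_assoc (F * Qᵀ) K' K, hK'K, Matrix.mul_one,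
        Matrix.mul_assoc F Qᵀ Q, hQtQ, Matrix.mul_one]
    exact e3.symm
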